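/- Let a, b ∈ I with a ≤ s0 ≤ b, and let f, g : I → ℂ belong to L²_β(a,b), be continuous and differentiable at s0, and suppose D_β f and D_β g are bounded on the set {β^k(a), β^k(b) : k ∈ ℕ₀} ∪ {s0}. Then ⟨D_β f, g⟩ = f(b)·conj(g(β^{-1}(b))) − f(a)·conj(g(β^{-1}(a))) + ⟨f, −(D_β β^{-1})·(D_{β^{-1}} g)⟩, where the inner products are taken over (a,b). -/

import Mathlib

open Function Set ComplexConjugate

/-- The β-derivative `D_β f` of `f : ℝ → ℂ`:
`(f (β t) - f t) / (β t - t)` for `t ≠ s0`, and `f' s0` at `t = s0`. -/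
noncomputable def Dq (β : ℝ → ℝ) (s0 : ℝ) (f : ℝ → ℂ) (t : ℝ) : ℂ :=
  if t = s0 then deriv f s0 else (f (β t) - f t) / ((β t : ℂ) - (t : ℂ))

/-- The β-integral `∫_{s0}^{x} f d_β = ∑_{k} (β^k x - β^{k+1} x) f (β^k x)` (complex-valued). -/
noncomputable def betaInt (β : ℝ → ℝ) (x : ℝ) (f : ℝ → ℂ) : ℂ :=
  ∑' k : ℕ, ((β^[k] x - β^[k + 1] x : ℝ) : ℂ) * f (β^[k] x)

/-- The β-integral `∫_{s0}^{x} f d_β` for a real-valued integrand. -/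
noncomputable def betaIntR (β : ℝ → ℝ) (x : ℝ) (f : ℝ → ℝ) : ℝ :=
  ∑' k : ℕ, (β^[k] x - β^[k + 1] x) * f (β^[k] x)

/-- `∫_a^b f d_β := ∫_{s0}^b f d_β - ∫_{s0}^a f d_β`. -/
noncomputable def betaIntAB (β : ℝ → ℝ) (a b : ℝ) (f : ℝ → ℂ) : ℂ :=
  betaInt β b f - betaInt β a f

/-- `∫_a^b f d_β` for a real-valued integrand. -/
noncomputable def betaIntRAB (β : ℝ → ℝ) (a b : ℝ) (f : ℝ → ℝ) : ℝ :=
  betaIntR β b f - betaIntR β a f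

/-- `D_β β⁻¹`, viewed as a complex-valued function. -/
noncomputable def DbinvC (β βinv : ℝ → ℝ) (s0 : ℝ) : ℝ → ℂ :=
  Dq β s0 fun u => (βinv u : ℂ)

/-- The β-Sturm–Liouville operator
`ℓ_β y (t) = -(D_β β⁻¹)(t) · (D_{β⁻¹} (D_β y))(t) + r t · y t`. -/
noncomputable def ellBeta (β βinv : ℝ → ℝ) (s0 : ℝ) (r : ℝ → ℝ) (y : ℝ → ℂ) (t : ℝ) : ℂ :=
  -(DbinvC β βinv s0 t) * Dq βinv s0 (Dq β s0 y) t + (r t : ℂ) * y t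

/-- The β-Wronskian `[y,z](t) = y t · (D_{β⁻¹} z) t - z t · (D_{β⁻¹} y) t`. -/
noncomputable def wronk (βinv : ℝ → ℝ) (s0 : ℝ) (y z : ℝ → ℂ) (t : ℝ) : ℂ :=
  y t * Dq βinv s0 z t - z t * Dq βinv s0 y t

/-- The β-exponential `e_{p,β}(t) = 1 / ∏_k (1 - p(β^k t)(β^k t - β^{k+1} t))`. -/
noncomputable def ebeta (β : ℝ → ℝ) (p : ℝ → ℂ) (t : ℝ) : ℂ :=
  1 / ∏' k : ℕ, (1 - p (β^[k] t) * ((β^[k] t - β^[k + 1] t : ℝ) : ℂ))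

/-- The β-exponential `E_{p,β}(t) = ∏_k (1 + p(β^k t)(β^k t - β^{k+1} t))`. -/
noncomputable def Ebeta (β : ℝ → ℝ) (p : ℝ → ℂ) (t : ℝ) : ℂ :=
  ∏' k : ℕ, (1 + p (β^[k] t) * ((β^[k] t - β^[k + 1] t : ℝ) : ℂ))

/-- `sin_{p,β}(t) = (e_{ip,β}(t) - e_{-ip,β}(t)) / (2i)`. -/
noncomputable def sinBeta (β : ℝ → ℝ) (p : ℝ → ℂ) (t : ℝ) : ℂ :=
  (ebeta β (fun s => Complex.I * p s) t - ebeta β (fun s => -(Complex.I * p s)) t) /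
    (2 * Complex.I)

/-- `cos_{p,β}(t) = (e_{ip,β}(t) + e_{-ip,β}(t)) / 2`. -/
noncomputable def cosBeta (β : ℝ → ℝ) (p : ℝ → ℂ) (t : ℝ) : ℂ :=
  (ebeta β (fun s => Complex.I * p s) t + ebeta β (fun s => -(Complex.I * p s)) t) / 2


lemma aux_conv (I : Set ℝ) (hIconn : I.OrdConnected)
    (β : ℝ → ℝ) (s0 : ℝ)
    (hmono : StrictMonoOn β I) (hcont : ContinuousOn β I) (hmaps : Set.MapsTo β I I)
    (hs0I : s0 ∈ I) (hfix : β s0 = s0)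
    (hsign : ∀ t ∈ I, (t - s0) * (β t - t) ≤ 0)
    (huniq : ∀ t ∈ I, (t - s0) * (β t - t) = 0 → t = s0)
    (x : ℝ) (hx : x ∈ I) :
    (∀ k, β^[k] x ∈ I) ∧
      Filter.Tendsto (fun k => β^[k] x) Filter.atTop (nhds s0) ∧
      Summable (fun k : ℕ => |β^[k] x - β^[k + 1] x|) := by
  set t : ℕ → ℝ := fun k => β^[k] x with ht
  have hmem : ∀ k, t k ∈ I := by
    intro k; induction k with
    | zero => exact hx
    | succ n ih => rw [show t (n+1) = β (t n) from Function.iterate_succ_apply' β n x]; exact hmaps ih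
  have hstep : ∀ k, t (k + 1) = β (t k) := fun k => Function.iterate_succ_apply' β k x
  refine ⟨hmem, ?_⟩
  rcases le_total s0 x with hxs | hxs
  · -- x ≥ s0
    have hge : ∀ k, s0 ≤ t k := by
      intro k; induction k with
      | zero => exact hxs
      | succ n ih =>
        rw [hstep n]
        rcases eq_or_lt_of_le ih with h | h
        · rw [← h, hfix]
        · exact le_of_lt (hfix ▸ hmono hs0I (hmem n) h)
    have hanti : ∀ k, t (k + 1) ≤ t k := by
      intro k
      rcases eq_or_lt_of_le (hge k) with h | h
      · rw [hstep k, ← h, hfix]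
      · have := hsign (t k) (hmem k)
        rw [hstep k]; nlinarith
    have hAnti : Antitone t := antitone_nat_of_succ_le hanti
    have hbdd : BddBelow (Set.range t) := ⟨s0, by rintro y ⟨k, rfl⟩; exact hge k⟩
    have htend0 : Filter.Tendsto t Filter.atTop (nhds (⨅ k, t k)) := tendsto_atTop_ciInf hAnti hbdd
    set L := ⨅ k, t k with hL
    have hLge : s0 ≤ L := le_ciInf hge
    have hLle : L ≤ x := ciInf_le hbdd 0
    have hLI : L ∈ I := hIconn.out hs0I hx ⟨hLge, hLle⟩
    have hβL : β L = L := by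
      have h1 : Filter.Tendsto (fun k => t (k + 1)) Filter.atTop (nhds L) :=
        (Filter.tendsto_add_atTop_iff_nat 1).mpr htend0
      have h2 : Filter.Tendsto (fun k => β (t k)) Filter.atTop (nhds (β L)) :=
        (hcont L hLI).tendsto.comp
          (tendsto_nhdsWithin_iff.mpr ⟨htend0, Filter.Eventually.of_forall hmem⟩)
      exact tendsto_nhds_unique (by simpa [hstep] using h1) h2 |>.symm
    have hLs0 : L = s0 := huniq L hLI (by rw [hβL]; ring)
    rw [hLs0] at htend0
    refine ⟨htend0, ?_⟩
    have hw : ∀ k, 0 ≤ t k - t (k + 1) := fun k => sub_nonneg.mpr (hanti k)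
    have hsum : Summable (fun k => t k - t (k + 1)) := by
      apply summable_of_sum_range_le (c := x - s0) hw
      intro n
      rw [Finset.sum_range_sub' t n]
      have h0 : t 0 = x := rfl
      have := hge n; linarith
    have : (fun k : ℕ => |t k - t (k + 1)|) = fun k => t k - t (k + 1) :=
      funext fun k => abs_of_nonneg (hw k)
    rw [this]; exact hsum
  · -- x ≤ s0
    have hge : ∀ k, t k ≤ s0 := by
      intro k; induction k with
      | zero => exact hxs
      | succ n ih =>
        rw [hstep n]
        rcases eq_or_lt_of_le ih with h | h
        · rw [h, hfix]
        · exact le_of_lt (hfix ▸ hmono (hmem n) hs0I h)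
    have hanti : ∀ k, t k ≤ t (k + 1) := by
      intro k
      rcases eq_or_lt_of_le (hge k) with h | h
      · rw [hstep k, h, hfix]
      · have := hsign (t k) (hmem k)
        rw [hstep k]; nlinarith
    have hMono : Monotone t := monotone_nat_of_le_succ hanti
    have hbdd : BddAbove (Set.range t) := ⟨s0, by rintro y ⟨k, rfl⟩; exact hge k⟩
    have htend0 : Filter.Tendsto t Filter.atTop (nhds (⨆ k, t k)) := tendsto_atTop_ciSup hMono hbdd
    set L := ⨆ k, t k with hL
    have hLge : L ≤ s0 := ciSup_le hge
    have hLle : x ≤ L := le_ciSup hbdd 0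
    have hLI : L ∈ I := hIconn.out hx hs0I ⟨hLle, hLge⟩
    have hβL : β L = L := by
      have h1 : Filter.Tendsto (fun k => t (k + 1)) Filter.atTop (nhds L) :=
        (Filter.tendsto_add_atTop_iff_nat 1).mpr htend0
      have h2 : Filter.Tendsto (fun k => β (t k)) Filter.atTop (nhds (β L)) :=
        (hcont L hLI).tendsto.comp
          (tendsto_nhdsWithin_iff.mpr ⟨htend0, Filter.Eventually.of_forall hmem⟩)
      exact tendsto_nhds_unique (by simpa [hstep] using h1) h2 |>.symm
    have hLs0 : L = s0 := huniq L hLI (by rw [hβL]; ring)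
    rw [hLs0] at htend0
    refine ⟨htend0, ?_⟩
    have hw : ∀ k, 0 ≤ t (k + 1) - t k := fun k => sub_nonneg.mpr (hanti k)
    have hsum : Summable (fun k => t (k + 1) - t k) := by
      apply summable_of_sum_range_le (c := s0 - x) hw
      intro n
      rw [Finset.sum_range_sub t n]
      have h0 : t 0 = x := rfl
      have := hge n; linarith
    have : (fun k : ℕ => |t k - t (k + 1)|) = fun k => t (k + 1) - t k :=
      funext fun k => by rw [abs_sub_comm]; exact abs_of_nonneg (hw k)
    rw [this]; exact hsum

lemma key_lemma (I : Set ℝ) (β βinv : ℝ → ℝ) (s0 : ℝ)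
    (hinj : Set.InjOn β I) (hmaps : Set.MapsTo β I I) (hinv : Set.InvOn βinv β I I)
    (hs0I : s0 ∈ I) (hfix : β s0 = s0)
    (huniq : ∀ t ∈ I, (t - s0) * (β t - t) = 0 → t = s0)
    (x : ℝ) (hx : x ∈ I)
    (hmem : ∀ k, β^[k] x ∈ I)
    (htend : Filter.Tendsto (fun k => β^[k] x) Filter.atTop (nhds s0))
    (hwsum : Summable (fun k : ℕ => |β^[k] x - β^[k + 1] x|))
    (f g : ℝ → ℂ)
    (hfc : ContinuousAt f s0) (hgc : ContinuousAt g s0)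
    (Cf Cg : ℝ)
    (hCf : ∀ k, ‖Dq β s0 f (β^[k] x)‖ ≤ Cf)
    (hCg : ∀ k, ‖Dq β s0 g (β^[k] x)‖ ≤ Cg) :
    betaInt β x (fun t => Dq β s0 f t * conj (g t)) -
      betaInt β x (fun t => f t * conj (-(DbinvC β βinv s0 t) * Dq βinv s0 g t)) =
      f x * conj (g (βinv x)) - f s0 * conj (g s0) := by
  set t : ℕ → ℝ := fun k => β^[k] x with htdef
  have hstep : ∀ k, t (k + 1) = β (t k) := fun k => Function.iterate_succ_apply' β k x
  set A : ℕ → ℂ := fun k => ((t k - t (k + 1) : ℝ) : ℂ) * (Dq β s0 f (t k) * conj (g (t k)))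
    with hAdef
  set B : ℕ → ℂ := fun k => ((t k - t (k + 1) : ℝ) : ℂ) *
      (f (t k) * conj (-(DbinvC β βinv s0 (t k)) * Dq βinv s0 g (t k))) with hBdef
  set u : ℕ → ℂ := fun k => f (t k) * conj (g (βinv (t k))) with hudef
  -- basic nonzero facts at points ≠ s0
  have hfacts : ∀ k, t k ≠ s0 →
      β (t k) ≠ t k ∧ βinv (t k) ≠ t k ∧ β (t k) ≠ s0 ∧ βinv (β (t k)) = t k := by
    intro k hk
    have hki : t k ∈ I := hmem k
    have h1 : β (t k) ≠ t k := fun h => hk (huniq _ hki (by rw [h]; ring))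
    have h4 : βinv (β (t k)) = t k := hinv.1 hki
    have h2 : βinv (t k) ≠ t k := by
      intro h
      have hbb : β (βinv (t k)) = t k := hinv.2 hki
      rw [h] at hbb
      exact h1 hbb
    have h3 : β (t k) ≠ s0 := by
      intro h
      have : β (t k) = β s0 := by rw [h, hfix]
      exact hk (hinj hki hs0I this)
    exact ⟨h1, h2, h3, h4⟩
  have hzero : ∀ k, t k = s0 → t (k + 1) = s0 := by
    intro k hk; rw [hstep k, hk, hfix]
  -- F1 : A k - B k = u k - u (k + 1)
  have hF1 : ∀ k, A k - B k = u k - u (k + 1) := by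
    intro k
    by_cases hk : t k = s0
    · have hk1 := hzero k hk
      simp only [hAdef, hBdef, hudef, hk, hk1, sub_self, Complex.ofReal_zero, zero_mul]
    · obtain ⟨h1, h2, h3, h4⟩ := hfacts k hk
      have hbi : βinv (t (k + 1)) = t k := by rw [hstep k]; exact h4
      have hd1 : ((t (k+1) : ℂ)) - ((t k : ℂ)) ≠ 0 := by
        rw [hstep k]
        simpa [sub_eq_zero] using fun h => h1 (Complex.ofReal_injective h)
      have hd2 : ((βinv (t k) : ℂ)) - ((t k : ℂ)) ≠ 0 := by
        simpa [sub_eq_zero] using fun h => h2 (Complex.ofReal_injective h)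
      have eA : Dq β s0 f (t k) =
          (f (t (k+1)) - f (t k)) / ((t (k+1) : ℂ) - (t k : ℂ)) := by
        simp only [Dq, if_neg hk]; rw [← hstep k]
      have eB1 : DbinvC β βinv s0 (t k) =
          ((t k : ℂ) - (βinv (t k) : ℂ)) / ((t (k+1) : ℂ) - (t k : ℂ)) := by
        simp only [DbinvC, Dq, if_neg hk]; rw [h4, ← hstep k]
      have eB2 : Dq βinv s0 g (t k) =
          (g (βinv (t k)) - g (t k)) / ((βinv (t k) : ℂ) - (t k : ℂ)) := by
        simp only [Dq, if_neg hk]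
      simp only [hAdef, hBdef, hudef]
      rw [eA, eB1, eB2, hbi]
      simp only [map_mul, map_neg, map_div₀, map_sub, Complex.conj_ofReal]
      push_cast
      field_simp
      ring
  -- F2 : B (k+1) in terms of Dq g at t k
  have hF2 : ∀ k, B (k + 1) =
      -((t k - t (k + 1) : ℝ) : ℂ) * (f (t (k + 1)) * conj (Dq β s0 g (t k))) := by
    intro k
    by_cases hk : t k = s0
    · have hk1 := hzero k hk
      have hk2 := hzero (k + 1) hk1
      simp only [hBdef, hk, hk1, hk2, sub_self, Complex.ofReal_zero, zero_mul, neg_zero]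
    · obtain ⟨h1, h2, h3, h4⟩ := hfacts k hk
      have hk1 : t (k + 1) ≠ s0 := by rw [hstep k]; exact h3
      obtain ⟨h1', h2', h3', h4'⟩ := hfacts (k + 1) hk1
      have hbi : βinv (t (k + 1)) = t k := by rw [hstep k]; exact h4
      have hd1 : ((t (k+1) : ℂ)) - ((t k : ℂ)) ≠ 0 := by
        rw [hstep k]
        simpa [sub_eq_zero] using fun h => h1 (Complex.ofReal_injective h)
      have hd2 : ((t (k+2) : ℂ)) - ((t (k+1) : ℂ)) ≠ 0 := by
        rw [hstep (k+1)]
        simpa [sub_eq_zero] using fun h => h1' (Complex.ofReal_injective h)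
      have eA' : Dq β s0 g (t k) =
          (g (t (k+1)) - g (t k)) / ((t (k+1) : ℂ) - (t k : ℂ)) := by
        simp only [Dq, if_neg hk]; rw [← hstep k]
      have eC1 : DbinvC β βinv s0 (t (k+1)) =
          ((t (k+1) : ℂ) - (t k : ℂ)) / ((t (k+2) : ℂ) - (t (k+1) : ℂ)) := by
        have hb1 : βinv (β (t (k+1))) = t (k+1) := h4'
        simp only [DbinvC, Dq, if_neg hk1]; rw [hb1, hbi, ← hstep (k+1)]
      have eC2 : Dq βinv s0 g (t (k+1)) =
          (g (t k) - g (t (k+1))) / ((t k : ℂ) - (t (k+1) : ℂ)) := by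
        simp only [Dq, if_neg hk1]; rw [hbi]
      have hd3 : ((t k : ℂ)) - ((t (k+1) : ℂ)) ≠ 0 := fun h => hd1 (by
        rw [sub_eq_zero] at h ⊢; exact h.symm)
      simp only [hBdef]
      rw [eC1, eC2, eA']
      simp only [map_mul, map_neg, map_div₀, map_sub, Complex.conj_ofReal]
      push_cast
      field_simp
      ring
  -- bounds on f, g along the sequence
  have hft : Filter.Tendsto (fun k => ‖f (t k)‖) Filter.atTop (nhds ‖f s0‖) :=
    ((hfc.tendsto.comp htend).norm)
  have hgt : Filter.Tendsto (fun k => ‖g (t k)‖) Filter.atTop (nhds ‖g s0‖) :=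
    ((hgc.tendsto.comp htend).norm)
  obtain ⟨Mf, hMf⟩ := hft.bddAbove_range
  obtain ⟨Mg, hMg⟩ := hgt.bddAbove_range
  have hMf' : ∀ k, ‖f (t k)‖ ≤ Mf := fun k => hMf ⟨k, rfl⟩
  have hMg' : ∀ k, ‖g (t k)‖ ≤ Mg := fun k => hMg ⟨k, rfl⟩
  -- summability of A
  have hsumA : Summable A := by
    apply Summable.of_norm_bounded (g := fun k => |t k - t (k + 1)| * (Cf * Mg))
      (hwsum.mul_right (Cf * Mg))
    intro k
    simp only [hAdef, norm_mul, Complex.norm_real, Real.norm_eq_abs, RCLike.norm_conj]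
    have h1 : ‖Dq β s0 f (t k)‖ ≤ Cf := hCf k
    have h2 := hMg' k
    have h3 := norm_nonneg (Dq β s0 f (t k))
    have h4 := norm_nonneg (g (t k))
    exact mul_le_mul_of_nonneg_left (mul_le_mul h1 h2 h4 (h3.trans h1)) (abs_nonneg _)
  -- summability of B
  have hsumB : Summable B := by
    rw [← summable_nat_add_iff 1]
    apply Summable.of_norm_bounded (g := fun k => |t k - t (k + 1)| * (Mf * Cg))
      (hwsum.mul_right (Mf * Cg))
    intro k
    rw [hF2 k]
    simp only [norm_mul, norm_neg, Complex.norm_real, Real.norm_eq_abs, RCLike.norm_conj]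
    have h1 := hMf' (k + 1)
    have h2 : ‖Dq β s0 g (t k)‖ ≤ Cg := hCg k
    have h3 := norm_nonneg (f (t (k + 1)))
    have h4 := norm_nonneg (Dq β s0 g (t k))
    exact mul_le_mul_of_nonneg_left (mul_le_mul h1 h2 h4 (h3.trans h1)) (abs_nonneg _)
  -- the telescoping limit
  have hulim : Filter.Tendsto u Filter.atTop (nhds (f s0 * conj (g s0))) := by
    rw [← Filter.tendsto_add_atTop_iff_nat 1]
    have heq : (fun k => u (k + 1)) = fun k => f (t (k + 1)) * conj (g (t k)) := by
      funext k
      simp only [hudef]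
      rw [hstep k, hinv.1 (hmem k)]
    rw [heq]
    exact ((hfc.tendsto.comp ((Filter.tendsto_add_atTop_iff_nat 1).mpr htend)).mul
      ((Complex.continuous_conj.tendsto _).comp (hgc.tendsto.comp htend)))
  have hAB : Summable (fun k => A k - B k) := hsumA.sub hsumB
  have hsum_eq : ∑' k, (A k - B k) = f x * conj (g (βinv x)) - f s0 * conj (g s0) := by
    have h1 : Filter.Tendsto (fun n => ∑ k ∈ Finset.range n, (A k - B k)) Filter.atTop
        (nhds (∑' k, (A k - B k))) := hAB.hasSum.tendsto_sum_nat
    have h2 : (fun n => ∑ k ∈ Finset.range n, (A k - B k)) = fun n => u 0 - u n := by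
      funext n
      rw [Finset.sum_congr rfl (fun k _ => hF1 k), Finset.sum_range_sub' u n]
    rw [h2] at h1
    have h3 : Filter.Tendsto (fun n => u 0 - u n) Filter.atTop
        (nhds (u 0 - f s0 * conj (g s0))) := tendsto_const_nhds.sub hulim
    have h4 := tendsto_nhds_unique h1 h3
    rw [h4]
    rfl
  have e1 : betaInt β x (fun s => Dq β s0 f s * conj (g s)) = ∑' k, A k := rfl
  have e2 : betaInt β x (fun s => f s * conj (-(DbinvC β βinv s0 s) * Dq βinv s0 g s)) =
      ∑' k, B k := rfl
  rw [e1, e2, ← Summable.tsum_sub hsumA hsumB, hsum_eq]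

theorem stmt_4
    (I : Set ℝ) (hIconn : I.OrdConnected)
    (β βinv : ℝ → ℝ) (s0 : ℝ)
    (hmono : StrictMonoOn β I) (hcont : ContinuousOn β I)
    (hbij : Set.BijOn β I I) (hinv : Set.InvOn βinv β I I)
    (hs0I : s0 ∈ I) (hfix : β s0 = s0)
    (hsign : ∀ t ∈ I, (t - s0) * (β t - t) ≤ 0)
    (huniq : ∀ t ∈ I, (t - s0) * (β t - t) = 0 → t = s0)
    (a b : ℝ) (ha : a ∈ I) (hb : b ∈ I) (has0 : a ≤ s0) (hs0b : s0 ≤ b) (f g : ℝ → ℂ)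
    (hfL2a : Summable fun j : ℕ => (β^[j] a - β^[j + 1] a) * ‖f (β^[j] a)‖ ^ 2)
    (hfL2b : Summable fun j : ℕ => (β^[j] b - β^[j + 1] b) * ‖f (β^[j] b)‖ ^ 2)
    (hgL2a : Summable fun j : ℕ => (β^[j] a - β^[j + 1] a) * ‖g (β^[j] a)‖ ^ 2)
    (hgL2b : Summable fun j : ℕ => (β^[j] b - β^[j + 1] b) * ‖g (β^[j] b)‖ ^ 2)
    (hfc : ContinuousAt f s0) (hgc : ContinuousAt g s0)
    (hfd : DifferentiableAt ℝ f s0) (hgd : DifferentiableAt ℝ g s0)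
    (hfb : ∃ C, ∀ t ∈ insert s0 (Set.range (fun j : ℕ => β^[j] a) ∪ Set.range (fun j : ℕ => β^[j] b)), ‖Dq β s0 f t‖ ≤ C)
    (hgb : ∃ C, ∀ t ∈ insert s0 (Set.range (fun j : ℕ => β^[j] a) ∪ Set.range (fun j : ℕ => β^[j] b)), ‖Dq β s0 g t‖ ≤ C) :
    betaIntAB β a b (fun t => Dq β s0 f t * conj (g t)) =
      f b * conj (g (βinv b)) - f a * conj (g (βinv a)) +
        betaIntAB β a b (fun t => f t * conj (-(DbinvC β βinv s0 t) * Dq βinv s0 g t)) := by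
  obtain ⟨hmema, htenda, hwsuma⟩ :=
    aux_conv I hIconn β s0 hmono hcont hbij.mapsTo hs0I hfix hsign huniq a ha
  obtain ⟨hmemb, htendb, hwsumb⟩ :=
    aux_conv I hIconn β s0 hmono hcont hbij.mapsTo hs0I hfix hsign huniq b hb
  obtain ⟨Cf, hCf⟩ := hfb
  obtain ⟨Cg, hCg⟩ := hgb
  have hCfa : ∀ k, ‖Dq β s0 f (β^[k] a)‖ ≤ Cf :=
    fun k => hCf _ (Set.mem_insert_of_mem _ (Or.inl ⟨k, rfl⟩))
  have hCfb : ∀ k, ‖Dq β s0 f (β^[k] b)‖ ≤ Cf :=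
    fun k => hCf _ (Set.mem_insert_of_mem _ (Or.inr ⟨k, rfl⟩))
  have hCga : ∀ k, ‖Dq β s0 g (β^[k] a)‖ ≤ Cg :=
    fun k => hCg _ (Set.mem_insert_of_mem _ (Or.inl ⟨k, rfl⟩))
  have hCgb : ∀ k, ‖Dq β s0 g (β^[k] b)‖ ≤ Cg :=
    fun k => hCg _ (Set.mem_insert_of_mem _ (Or.inr ⟨k, rfl⟩))
  have keya := key_lemma I β βinv s0 hbij.injOn hbij.mapsTo hinv hs0I hfix huniq a ha
    hmema htenda hwsuma f g hfc hgc Cf Cg hCfa hCga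
  have keyb := key_lemma I β βinv s0 hbij.injOn hbij.mapsTo hinv hs0I hfix huniq b hb
    hmemb htendb hwsumb f g hfc hgc Cf Cg hCfb hCgb
  simp only [betaIntAB]
  linear_combination keyb - keya
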